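/- The family consisting of the 3(n−6) vectors e_1−e_2+e_j, e_2−e_3+e_j, −e_1+e_3+e_j for 4 ≤ j ≤ n−3, together with the four vectors with support {1,2,3} and sign patterns (1,1,1), (1,−1,−1), (−1,1,−1), (−1,−1,1), is an independent set of size 3n−14 in G_n for n ≥ 7. -/

import Mathlib

/-- The vertex set of the graph `G_n`: vectors in `{-1,0,1}^n` with exactly three
nonzero coordinates. -/
def Gvert (n : ℕ) : Type :=
  {v : Fin n → ℤ // (∀ i, v i = -1 ∨ v i = 0 ∨ v i = 1) ∧
    (Finset.univ.filter (fun i => v i ≠ 0)).card = 3}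

/-- The graph `G_n`: two such vectors are adjacent iff their scalar product is `1`. -/
def G (n : ℕ) : SimpleGraph (Gvert n) where
  Adj u v := u ≠ v ∧ ∑ i, u.1 i * v.1 i = 1
  symm := by
    refine ⟨?_⟩
    rintro u v ⟨h1, h2⟩
    exact ⟨h1.symm, (Finset.sum_congr rfl fun i _ => mul_comm _ _).trans h2⟩
  loopless := by refine ⟨?_⟩; rintro u ⟨h1, -⟩; exact h1 rfl

/-- A set of vertices is independent if no two of its members are adjacent. -/
def IsIndep {V : Type*} (H : SimpleGraph V) (s : Set V) : Prop :=
  s.Pairwise fun u v => ¬ H.Adj u v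

/-- The constant `c(n)` from the paper. -/
def c (n : ℕ) : ℕ := if n % 4 = 0 then 0 else if n % 4 = 1 then 1 else 2

/-- The vector supported on distinct coordinates `a, b, c` with values `x, y, z`. -/
def vec3 {n : ℕ} (a b c : Fin n) (x y z : ℤ) : Fin n → ℤ :=
  fun i => if i = a then x else if i = b then y else if i = c then z else 0

lemma sum_vec3_mul {n : ℕ} {a b c : Fin n} (hab : a ≠ b) (hac : a ≠ c) (hbc : b ≠ c)
    (x y z : ℤ) (w : Fin n → ℤ) :
    ∑ i, vec3 a b c x y z i * w i = x * w a + y * w b + z * w c := by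
  rw [← Finset.sum_subset (Finset.subset_univ ({a, b, c} : Finset (Fin n)))
    (fun i _ hi => by
      simp only [Finset.mem_insert, Finset.mem_singleton, not_or] at hi
      simp [vec3, hi.1, hi.2.1, hi.2.2])]
  rw [Finset.sum_insert (by simp [hab, hac]), Finset.sum_insert (by simp [hbc]),
    Finset.sum_singleton]
  simp [vec3, hab.symm, hac.symm, hbc.symm]; ring

lemma vec3_prop {n : ℕ} {a b c : Fin n} (hab : a ≠ b) (hac : a ≠ c) (hbc : b ≠ c)
    {x y z : ℤ} (hx : x = -1 ∨ x = 1) (hy : y = -1 ∨ y = 1) (hz : z = -1 ∨ z = 1) :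
    (∀ i, vec3 a b c x y z i = -1 ∨ vec3 a b c x y z i = 0 ∨ vec3 a b c x y z i = 1) ∧
    (Finset.univ.filter fun i => vec3 a b c x y z i ≠ 0).card = 3 := by
  constructor
  · intro i
    simp only [vec3]
    split_ifs <;> tauto
  · have : (Finset.univ.filter fun i => vec3 a b c x y z i ≠ 0) = {a, b, c} := by
      ext i
      rw [Finset.mem_filter]
      simp only [Finset.mem_filter_univ, Finset.mem_filter, Finset.mem_univ, true_and, Finset.mem_insert,
        Finset.mem_singleton, vec3]
      split_ifs <;> simp_all <;> omega
    rw [this, Finset.card_insert_of_notMem (by simp [hab, hac]),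
      Finset.card_insert_of_notMem (by simp [hbc]), Finset.card_singleton]


set_option maxHeartbeats 1600000

/-- For `n ≥ 7`, the three snakes `e₁ - e₂ + eⱼ`, `e₂ - e₃ + eⱼ`, `-e₁ + e₃ + eⱼ`
(for `4 ≤ j ≤ n - 3`, here `0`-indexed as `3 ≤ j ≤ n - 4`) together with the quad on
`{1,2,3}` with sign patterns `(1,1,1), (1,-1,-1), (-1,1,-1), (-1,-1,1)` form an
independent set of size `3n - 14` in `G_n` (a "cobra"). -/
theorem cobra_indep (n : ℕ) (hn : 7 ≤ n) :
    let a : Fin n := ⟨0, by omega⟩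
    let b : Fin n := ⟨1, by omega⟩
    let c' : Fin n := ⟨2, by omega⟩
    let S : Set (Fin n → ℤ) :=
      (⋃ j ∈ {j : Fin n | 3 ≤ (j : ℕ) ∧ (j : ℕ) ≤ n - 4},
        {vec3 a b j 1 (-1) 1, vec3 b c' j 1 (-1) 1, vec3 a c' j (-1) 1 1}) ∪
      {vec3 a b c' 1 1 1, vec3 a b c' 1 (-1) (-1),
        vec3 a b c' (-1) 1 (-1), vec3 a b c' (-1) (-1) 1}
    (∀ v ∈ S, (∀ i, v i = -1 ∨ v i = 0 ∨ v i = 1) ∧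
      (Finset.univ.filter fun i => v i ≠ 0).card = 3) ∧
    S.ncard = 3 * n - 14 ∧
    (∀ u ∈ S, ∀ v ∈ S, u ≠ v → ∑ i, u i * v i ≠ 1) := by
  intro a b c' S
  have ha : (a : ℕ) = 0 := rfl
  have hb : (b : ℕ) = 1 := rfl
  have hc : (c' : ℕ) = 2 := rfl
  have hmem : ∀ v, v ∈ S ↔ ((∃ j : Fin n, (3 ≤ (j:ℕ) ∧ (j:ℕ) ≤ n - 4) ∧
      (v = vec3 a b j 1 (-1) 1 ∨ v = vec3 b c' j 1 (-1) 1 ∨ v = vec3 a c' j (-1) 1 1)) ∨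
      (v = vec3 a b c' 1 1 1 ∨ v = vec3 a b c' 1 (-1) (-1) ∨
       v = vec3 a b c' (-1) 1 (-1) ∨ v = vec3 a b c' (-1) (-1) 1)) := by
    intro v
    simp only [S, Set.mem_union, Set.mem_iUnion, Set.mem_setOf_eq, Set.mem_insert_iff,
      Set.mem_singleton_iff, exists_prop]
  refine ⟨?_, ?_, ?_⟩
  · intro v hv
    rw [hmem] at hv
    rcases hv with ⟨j, ⟨hj1, hj2⟩, rfl | rfl | rfl⟩ | rfl | rfl | rfl | rfl <;>
      apply vec3_prop <;> simp [Fin.ext_iff] <;> omega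
  · classical
    set J := Finset.univ.filter (fun j : Fin n => 3 ≤ (j:ℕ) ∧ (j:ℕ) ≤ n - 4) with hJdef
    set T : Fin n → Finset (Fin n → ℤ) :=
      (fun j => {vec3 a b j 1 (-1) 1, vec3 b c' j 1 (-1) 1, vec3 a c' j (-1) 1 1}) with hTdef
    set Q : Finset (Fin n → ℤ) :=
      ({vec3 a b c' 1 1 1, vec3 a b c' 1 (-1) (-1), vec3 a b c' (-1) 1 (-1),
        vec3 a b c' (-1) (-1) 1} : Finset (Fin n → ℤ)) with hQdef
    have hS : S = ↑(J.biUnion T ∪ Q) := by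
      ext v
      rw [hmem]
      simp only [Finset.coe_union, Set.mem_union, Finset.mem_coe, Finset.mem_biUnion,
        hJdef, Finset.mem_filter, Finset.mem_univ, true_and, hTdef, hQdef,
        Finset.mem_insert, Finset.mem_singleton]
    rw [hS, Set.ncard_coe_finset]
    have hJcard : J.card = n - 6 := by
      have hJI : J = Finset.Icc (⟨3, by omega⟩ : Fin n) ⟨n - 4, by omega⟩ := by
        ext j
        simp [hJdef, Finset.mem_Icc, Fin.le_def]
      rw [hJI, Fin.card_Icc]
      simp; omega
    have hdisjQ : Disjoint (J.biUnion T) Q := by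
      rw [Finset.disjoint_left]
      intro v hv hq
      simp only [Finset.mem_biUnion, hJdef, Finset.mem_filter, Finset.mem_univ, true_and,
        hTdef, Finset.mem_insert, Finset.mem_singleton, hQdef] at hv hq
      obtain ⟨j, ⟨hj1, hj2⟩, hv⟩ := hv
      rcases hv with rfl | rfl | rfl <;> rcases hq with h | h | h | h <;>
      · have h0 := congrFun h a
        have h1 := congrFun h b
        have h2 := congrFun h c'
        simp only [vec3, Fin.ext_iff] at h0 h1 h2
        split_ifs at h0 h1 h2 <;> first | omega | (exfalso; assumption) | simp_all
    have hT3 : ∀ j ∈ J, (T j).card = 3 := by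
      intro j hj
      simp only [hJdef, Finset.mem_filter, Finset.mem_univ, true_and] at hj
      obtain ⟨hj1, hj2⟩ := hj
      rw [hTdef]
      rw [Finset.card_insert_of_notMem, Finset.card_insert_of_notMem,
        Finset.card_singleton]
      · simp only [Finset.mem_singleton]
        intro h
        have h0 := congrFun h a
        simp only [vec3, Fin.ext_iff] at h0
        split_ifs at h0 <;> first | omega | (exfalso; assumption) | simp_all
      · simp only [Finset.mem_insert, Finset.mem_singleton]
        push_neg
        constructor <;>
        · intro h
          have h0 := congrFun h a
          simp only [vec3, Fin.ext_iff] at h0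
          split_ifs at h0 <;> first | omega | (exfalso; assumption) | simp_all
    have hQ4 : Q.card = 4 := by
      rw [hQdef]
      rw [Finset.card_insert_of_notMem, Finset.card_insert_of_notMem,
        Finset.card_insert_of_notMem, Finset.card_singleton]
      · simp only [Finset.mem_singleton]
        intro h
        have h0 := congrFun h a
        have h1 := congrFun h b
        simp only [vec3, Fin.ext_iff] at h0 h1
        split_ifs at h0 h1 <;> first | omega | (exfalso; assumption) | simp_all
      · simp only [Finset.mem_insert, Finset.mem_singleton]
        push_neg
        constructor <;>
        · intro h
          have h0 := congrFun h a
          have h1 := congrFun h b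
          simp only [vec3, Fin.ext_iff] at h0 h1
          split_ifs at h0 h1 <;> first | omega | (exfalso; assumption) | simp_all
      · simp only [Finset.mem_insert, Finset.mem_singleton]
        push_neg
        refine ⟨?_, ?_, ?_⟩ <;>
        · intro h
          have h0 := congrFun h a
          have h1 := congrFun h b
          simp only [vec3, Fin.ext_iff] at h0 h1
          split_ifs at h0 h1 <;> first | omega | (exfalso; assumption) | simp_all
    have hdisjT : ∀ j ∈ J, ∀ k ∈ J, j ≠ k → Disjoint (T j) (T k) := by
      intro j hj k hk hjk
      simp only [hJdef, Finset.mem_filter, Finset.mem_univ, true_and] at hj hk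
      rw [Finset.disjoint_left]
      intro v hv hv'
      simp only [hTdef, Finset.mem_insert, Finset.mem_singleton] at hv hv'
      have hjk' : (j:ℕ) ≠ (k:ℕ) := fun h => hjk (Fin.ext h)
      rcases hv with rfl | rfl | rfl <;> rcases hv' with h | h | h <;>
      · have h0 := congrFun h a
        have h1 := congrFun h b
        have h2 := congrFun h c'
        have h3 := congrFun h j
        simp only [vec3, Fin.ext_iff] at h0 h1 h2 h3
        split_ifs at h0 h1 h2 h3 <;> first | omega | (exfalso; assumption) | simp_all
    rw [Finset.card_union_of_disjoint hdisjQ, Finset.card_biUnion hdisjT,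
      Finset.sum_congr rfl hT3, Finset.sum_const, smul_eq_mul, hJcard, hQ4]
    omega
  · have key : ∀ (p q r : Fin n), (p:ℕ) < q → (q:ℕ) < r → ∀ x y z (w : Fin n → ℤ),
        ∑ i, vec3 p q r x y z i * w i = x * w p + y * w q + z * w r := by
      intro p q r h1 h2 x y z w
      exact sum_vec3_mul (by simp [Fin.ext_iff]; omega) (by simp [Fin.ext_iff]; omega)
        (by simp [Fin.ext_iff]; omega) x y z w
    have dotA : ∀ (j : Fin n), 3 ≤ (j:ℕ) → (j:ℕ) ≤ n - 4 → ∀ w : Fin n → ℤ,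
        ∑ i, vec3 a b j 1 (-1) 1 i * w i = 1 * w a + (-1) * w b + 1 * w j :=
      fun j hj _ w => key a b j (by omega) (by omega) _ _ _ w
    have dotB : ∀ (j : Fin n), 3 ≤ (j:ℕ) → (j:ℕ) ≤ n - 4 → ∀ w : Fin n → ℤ,
        ∑ i, vec3 b c' j 1 (-1) 1 i * w i = 1 * w b + (-1) * w c' + 1 * w j :=
      fun j hj _ w => key b c' j (by omega) (by omega) _ _ _ w
    have dotC : ∀ (j : Fin n), 3 ≤ (j:ℕ) → (j:ℕ) ≤ n - 4 → ∀ w : Fin n → ℤ,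
        ∑ i, vec3 a c' j (-1) 1 1 i * w i = (-1) * w a + 1 * w c' + 1 * w j :=
      fun j hj _ w => key a c' j (by omega) (by omega) _ _ _ w
    have dotQ : ∀ x y z (w : Fin n → ℤ),
        ∑ i, vec3 a b c' x y z i * w i = x * w a + y * w b + z * w c' :=
      fun x y z w => key a b c' (by omega) (by omega) x y z w
    intro u hu v hv hne
    rw [hmem] at hu hv
    rcases hu with ⟨j, ⟨hj1, hj2⟩, rfl | rfl | rfl⟩ | rfl | rfl | rfl | rfl <;>
      rcases hv with ⟨k, ⟨hk1, hk2⟩, rfl | rfl | rfl⟩ | rfl | rfl | rfl | rfl <;>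
      (first
        | rw [dotA j hj1 hj2] | rw [dotB j hj1 hj2] | rw [dotC j hj1 hj2]
        | rw [dotQ]) <;>
      simp only [vec3, Fin.ext_iff] <;> split_ifs <;> first | omega | (exfalso; assumption)
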